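/- Let s = q·r with r ≥ 3, and let 𝒢 be an Abelian group of order s such that the number of involutions in 𝒢 is not equal to one. Then the set 𝒢 can be partitioned into pairwise disjoint subsets A_1, A_2, ..., A_q such that for every 1 ≤ i ≤ q, |A_i| = r and ∑_{a ∈ A_i} a = 0. -/

import Mathlib

/-- The weighted degree of a vertex `v` under an edge labeling `f` with values in an
additive Abelian group: the sum of the labels of all edges incident to `v`. -/
noncomputable def SimpleGraph.wdeg {V : Type} [Fintype V] (G : SimpleGraph V)
    {A : Type} [AddCommGroup A] (f : Sym2 V → A) (v : V) : A :=
  ∑ u ∈ (G.neighborSet v).toFinite.toFinset, f s(v, u)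

/-- An edge labeling `f` with values in an Abelian group `A` is `A`-irregular if the
weighted degrees of all vertices are pairwise distinct. -/
def SimpleGraph.IsIrregular {V : Type} [Fintype V] (G : SimpleGraph V)
    {A : Type} [AddCommGroup A] (f : Sym2 V → A) : Prop :=
  Function.Injective (G.wdeg f)

/-- The group irregularity strength `s_g(G)`: the smallest integer `s` such that for
every Abelian group of order `s` there exists a `𝒢`-irregular labeling of `G`. -/
noncomputable def SimpleGraph.groupIrregularityStrength {V : Type} [Fintype V]
    (G : SimpleGraph V) : ℕ :=
  sInf {s : ℕ | ∀ (A : Type) [AddCommGroup A] [Fintype A],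
    Fintype.card A = s → ∃ f : Sym2 V → A, G.IsIrregular f}

/-- The modular edge-gracefulness `k(G)`: the smallest integer `k ≥ |V(G)|` such that
there exists a `ℤ_k`-irregular labeling of `G`. -/
noncomputable def SimpleGraph.modularEdgeGracefulness {V : Type} [Fintype V]
    (G : SimpleGraph V) : ℕ :=
  sInf {k : ℕ | Fintype.card V ≤ k ∧ ∃ f : Sym2 V → ZMod k, G.IsIrregular f}

/-- `(X, Y)` is a bipartition of the connected component `c` of `G`: the two classes
partition the vertex set of `c` and every edge of the component joins `X` and `Y`. -/
def SimpleGraph.IsComponentBipartition {V : Type} (G : SimpleGraph V)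
    (c : G.ConnectedComponent) (X Y : Set V) : Prop :=
  X ∪ Y = c.supp ∧ Disjoint X Y ∧
    ∀ u v : V, u ∈ c.supp → v ∈ c.supp → G.Adj u v →
      ((u ∈ X ∧ v ∈ Y) ∨ (u ∈ Y ∧ v ∈ X))




open Function

/-! ### Helpers for ZMod arithmetic -/

lemma zmod_surj {n : ℕ} [NeZero n] (x : ZMod n) : ∃ a : ℕ, a < n ∧ x = (a : ZMod n) := by
  refine ⟨x.val, ZMod.val_lt x, ?_⟩
  rw [ZMod.natCast_val, ZMod.cast_id]

lemma zmod_nat_eq_cases {n : ℕ} (hn : 0 < n) {a b : ℕ} (h : (a : ZMod n) = (b : ZMod n))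
    (ha : a < 3 * n) (hb : b < 3 * n) :
    a = b ∨ a = b + n ∨ b = a + n ∨ a = b + 2 * n ∨ b = a + 2 * n := by
  rw [ZMod.natCast_eq_natCast_iff] at h
  rcases le_total a b with hab | hab
  · have hd : n ∣ b - a := (Nat.modEq_iff_dvd' hab).mp h
    obtain ⟨j, hj⟩ := hd
    have hj3 : j < 3 := by
      by_contra hc
      push_neg at hc
      have : n * 3 ≤ n * j := Nat.mul_le_mul_left n hc
      omega
    interval_cases j <;> omega
  · have hd : n ∣ a - b := (Nat.modEq_iff_dvd' hab).mp h.symm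
    obtain ⟨j, hj⟩ := hd
    have hj3 : j < 3 := by
      by_contra hc
      push_neg at hc
      have : n * 3 ≤ n * j := Nat.mul_le_mul_left n hc
      omega
    interval_cases j <;> omega

lemma zmod_val_natCast_of_lt {n : ℕ} {a : ℕ} (h : a < n) : ((a : ZMod n)).val = a := by
  haveI : NeZero n := ⟨by omega⟩
  rw [ZMod.val_natCast, Nat.mod_eq_of_lt h]

/-! ### Complete mappings -/

/-- `φ` is a complete mapping of `G`: both `φ` and `x ↦ x + φ x` are bijections. -/
def IsCM (G : Type*) [AddCommGroup G] (φ : G → G) : Prop :=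
  Function.Bijective φ ∧ Function.Bijective (fun x => x + φ x)

def HasCM (G : Type*) [AddCommGroup G] : Prop := ∃ φ : G → G, IsCM G φ

/-- Goodness: the structure needed to absorb one extra "bit" when adjoining an
even cyclic factor. -/
def Good (G : Type*) [AddCommGroup G] : Prop :=
  ∃ (τ : G) (c : G → Bool) (P : G → G),
    (τ ≠ 0 ∧ τ + τ = 0) ∧
    (∀ w w', c w = c w' → w + P w = w' + P w' → w = w') ∧
    (∀ w w', c w = c w' → w + P w ≠ w' + P w' + τ) ∧
    (∀ w w', c w = c w' → P w = P w' → w = w') ∧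
    (∀ w w', c w = false → c w' = true → P w ≠ P w' + τ)

section Transfers

variable {G H : Type*} [AddCommGroup G] [AddCommGroup H]

lemma HasCM.congr (e : G ≃+ H) (h : HasCM G) : HasCM H := by
  obtain ⟨φ, hb, hs⟩ := h
  refine ⟨fun x => e (φ (e.symm x)), ?_, ?_⟩
  · exact e.bijective.comp (hb.comp e.symm.bijective)
  · have : (fun x : H => x + e (φ (e.symm x)))
        = (fun y : G => e (y + φ y)) ∘ (fun x : H => e.symm x) := by
      funext x; simp [map_add]
    rw [this]
    exact (e.bijective.comp hs).comp e.symm.bijective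

lemma Good.congr (e : G ≃+ H) (h : Good G) : Good H := by
  obtain ⟨τ, c, P, ⟨ht0, ht2⟩, h2a, h2b, h3a, h3b⟩ := h
  refine ⟨e τ, fun w => c (e.symm w), fun w => e (P (e.symm w)), ⟨?_, ?_⟩, ?_, ?_, ?_, ?_⟩
  · simpa using e.injective.ne ht0
  · rw [← map_add, ht2, map_zero]
  · intro w w' hc he
    have h1 : e.symm w + P (e.symm w) = e.symm w' + P (e.symm w') := by
      apply e.injective
      simpa [map_add] using he
    have := h2a (e.symm w) (e.symm w') hc h1
    have := congrArg (⇑e) this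
    simpa using this
  · intro w w' hc he
    apply h2b (e.symm w) (e.symm w') hc
    apply e.injective
    simpa [map_add] using he
  · intro w w' hc he
    have := h3a (e.symm w) (e.symm w') hc (e.injective (by simpa using he))
    have := congrArg (⇑e) this
    simpa using this
  · intro w w' hc0 hc1 he
    apply h3b (e.symm w) (e.symm w') hc0 hc1
    apply e.injective
    simpa [map_add] using he

end Transfers

section Odd

variable {G : Type*} [AddCommGroup G] [Fintype G]

lemma double_inj_of_odd (h : Odd (Fintype.card G)) {x : G} (hx : x + x = 0) : x = 0 := by
  have h2 : (2 : ℕ) • x = 0 := by rw [two_nsmul]; exact hx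
  have hd : addOrderOf x ∣ 2 := addOrderOf_dvd_iff_nsmul_eq_zero.mpr h2
  have hc : addOrderOf x ∣ Fintype.card G := addOrderOf_dvd_card
  rcases (Nat.dvd_prime Nat.prime_two).mp hd with h1 | h1
  · have : (1 : ℕ) • x = 0 := addOrderOf_dvd_iff_nsmul_eq_zero.mp (h1 ▸ dvd_refl _)
    simpa using this
  · exfalso
    rw [h1] at hc
    rw [← Nat.not_even_iff_odd] at h
    exact h (even_iff_two_dvd.mpr hc)

lemma hasCM_of_odd (h : Odd (Fintype.card G)) : HasCM G := by
  refine ⟨id, bijective_id, ?_⟩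
  rw [← Finite.injective_iff_bijective]
  intro x y hxy
  simp only [id] at hxy
  have : (x - y) + (x - y) = 0 := by
    rw [sub_add_sub_comm, hxy, sub_self]
  have := double_inj_of_odd h this
  rwa [sub_eq_zero] at this

lemma sum_univ_eq_zero_of_odd (h : Odd (Fintype.card G)) : ∑ x : G, x = 0 := by
  have key : (∑ x : G, x) + (∑ x : G, x) = 0 := by
    nth_rewrite 2 [← Equiv.sum_comp (Equiv.neg G) (fun x : G => x)]
    rw [← Finset.sum_add_distrib]
    simp
  exact double_inj_of_odd h key

end Odd

/-! ### Small group-rearrangement helpers -/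

section GroupAux
variable {W : Type*} [AddCommGroup W]

lemma invol_swap {τ p p' : W} (hτ : τ + τ = 0) (h : p + τ = p') : p = p' + τ := by
  rw [← h, add_assoc, hτ, add_zero]

lemma sum_eq_shift {k a k' b : W} (h : k - a = k' - b) : k + b = k' + a := by
  calc k + b = (k - a) + (a + b) := by abel
    _ = (k' - b) + (a + b) := by rw [h]
    _ = k' + a := by abel

lemma sum_eq_shift' {k a k' b τ : W} (h : k - a = (k' - b) + τ) : k + b = (k' + a) + τ := by
  calc k + b = (k - a) + (a + b) := by abel
    _ = ((k' - b) + τ) + (a + b) := by rw [h]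
    _ = (k' + a) + τ := by abel

end GroupAux

/-! ### Base case : even cyclic groups are good -/

lemma add_sub_self' {W : Type*} [AddCommGroup W] (a k : W) : a + (k - a) = k := by abel

lemma good_zmod (m : ℕ) (hm : 0 < m) : Good (ZMod (2 * m)) := by
  haveI : NeZero (2 * m) := ⟨by omega⟩
  refine ⟨((m : ℕ) : ZMod (2 * m)), fun y => decide (y.val % 2 = 1),
    fun y => (((y.val + 1) / 2 : ℕ) : ZMod (2 * m)) - y, ⟨?_, ?_⟩, ?_, ?_, ?_, ?_⟩
  · intro h
    have := congrArg ZMod.val h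
    rw [zmod_val_natCast_of_lt (by omega), ZMod.val_zero] at this
    omega
  · rw [← Nat.cast_add]
    have : m + m = 2 * m := by ring
    rw [this, ZMod.natCast_self]
  · -- G2a
    intro w w' hc h
    obtain ⟨a, ha, rfl⟩ := zmod_surj w
    obtain ⟨b, hb, rfl⟩ := zmod_surj w'
    simp only [zmod_val_natCast_of_lt ha, zmod_val_natCast_of_lt hb, add_sub_self'] at hc h
    have hc' : a % 2 = 1 ↔ b % 2 = 1 := decide_eq_decide.mp hc
    have := zmod_nat_eq_cases (n := 2 * m) (by omega) h (by omega) (by omega)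
    congr 1
    omega
  · -- G2b
    intro w w' hc h
    obtain ⟨a, ha, rfl⟩ := zmod_surj w
    obtain ⟨b, hb, rfl⟩ := zmod_surj w'
    simp only [zmod_val_natCast_of_lt ha, zmod_val_natCast_of_lt hb, add_sub_self',
      ← Nat.cast_add] at hc h
    have hc' : a % 2 = 1 ↔ b % 2 = 1 := decide_eq_decide.mp hc
    have := zmod_nat_eq_cases (n := 2 * m) (by omega) h (by omega) (by omega)
    omega
  · -- G3a
    intro w w' hc h
    obtain ⟨a, ha, rfl⟩ := zmod_surj w
    obtain ⟨b, hb, rfl⟩ := zmod_surj w'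
    simp only [zmod_val_natCast_of_lt ha, zmod_val_natCast_of_lt hb] at hc h
    have h2 := sum_eq_shift h
    rw [← Nat.cast_add, ← Nat.cast_add] at h2
    have hc' : a % 2 = 1 ↔ b % 2 = 1 := decide_eq_decide.mp hc
    have := zmod_nat_eq_cases (n := 2 * m) (by omega) h2 (by omega) (by omega)
    congr 1
    omega
  · -- G3b
    intro w w' hc hc' h
    obtain ⟨a, ha, rfl⟩ := zmod_surj w
    obtain ⟨b, hb, rfl⟩ := zmod_surj w'
    simp only [zmod_val_natCast_of_lt ha] at hc h
    simp only [zmod_val_natCast_of_lt hb] at hc' h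
    have h2 := sum_eq_shift' h
    rw [← Nat.cast_add, ← Nat.cast_add, ← Nat.cast_add] at h2
    have hca : ¬ (a % 2 = 1) := by simpa using hc
    have hcb : b % 2 = 1 := by simpa using hc'
    have := zmod_nat_eq_cases (n := 2 * m) (by omega) h2 (by omega) (by omega)
    omega

/-! ### More helpers -/

lemma zmod_cast_inj {n : ℕ} (hn : 0 < n) {a b : ℕ} (ha : a < n) (hb : b < n)
    (h : (a : ZMod n) = b) : a = b := by
  haveI : NeZero n := ⟨by omega⟩
  have := congrArg ZMod.val h
  rwa [zmod_val_natCast_of_lt ha, zmod_val_natCast_of_lt hb] at this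

lemma dvd_bound_cases {M x : ℕ} (hM : 0 < M) (h : M ∣ x) (hx : 0 < x) (hx2 : x ≤ 2 * M) :
    x = M ∨ x = 2 * M := by
  obtain ⟨j, hj⟩ := h
  have hj2 : j ≤ 2 := by
    by_contra hc
    push_neg at hc
    have : M * 3 ≤ M * j := Nat.mul_le_mul_left M hc
    omega
  interval_cases j <;> omega

lemma val_flip {M : ℕ} (hM : 0 < M) (x : ZMod (2 * M)) :
    (M ≤ (x + ((M : ℕ) : ZMod (2 * M))).val) ↔ ¬ (M ≤ x.val) := by
  haveI : NeZero (2 * M) := ⟨by omega⟩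
  obtain ⟨a, ha, rfl⟩ := zmod_surj x
  rw [← Nat.cast_add, zmod_val_natCast_of_lt ha]
  rcases lt_or_ge (a + M) (2 * M) with h | h
  · rw [zmod_val_natCast_of_lt h]; omega
  · have he : ((a + M : ℕ) : ZMod (2 * M)) = ((a - M : ℕ) : ZMod (2 * M)) := by
      have h2 : (a + M : ℕ) = (a - M) + 2 * M := by omega
      rw [h2, Nat.cast_add, ZMod.natCast_self, add_zero]
    rw [he, zmod_val_natCast_of_lt (by omega)]
    omega

lemma reassoc4 {W : Type*} [AddCommGroup W] {w pw s w' pw' s' : W}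
    (h : w + (pw + s) = w' + (pw' + s')) : (w + pw) + s = (w' + pw') + s' := by
  calc (w + pw) + s = w + (pw + s) := by abel
    _ = w' + (pw' + s') := h
    _ = (w' + pw') + s' := by abel

lemma reassoc4' {W : Type*} [AddCommGroup W] {w pw s w' pw' s' t : W}
    (h : w + (pw + s) = w' + (pw' + s') + t) : (w + pw) + s = ((w' + pw') + t) + s' := by
  calc (w + pw) + s = w + (pw + s) := by abel
    _ = w' + (pw' + s') + t := h
    _ = ((w' + pw') + t) + s' := by abel

/-! ### Rider lemma : good × (group with cm) is good -/

lemma Good.prod_cm {W V : Type*} [AddCommGroup W] [AddCommGroup V]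
    (hW : Good W) (hV : HasCM V) : Good (W × V) := by
  obtain ⟨τ, c, P, ⟨ht0, ht2⟩, h2a, h2b, h3a, h3b⟩ := hW
  obtain ⟨θ, hθb, hθs⟩ := hV
  refine ⟨(τ, 0), fun u => c u.1, fun u => (P u.1, θ u.2), ⟨?_, ?_⟩, ?_, ?_, ?_, ?_⟩
  · simp [Prod.ext_iff, ht0]
  · simp [Prod.ext_iff, ht2]
  · rintro ⟨w, v⟩ ⟨w', v'⟩ hc h
    simp only [Prod.mk_add_mk, Prod.mk.injEq] at h ⊢
    obtain ⟨h1, h2⟩ := h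
    exact ⟨h2a w w' hc h1, hθs.injective h2⟩
  · rintro ⟨w, v⟩ ⟨w', v'⟩ hc h
    simp only [Prod.mk_add_mk, Prod.mk.injEq] at h
    exact h2b w w' hc h.1
  · rintro ⟨w, v⟩ ⟨w', v'⟩ hc h
    simp only [Prod.mk.injEq] at h ⊢
    exact ⟨h3a w w' hc h.1, hθb.injective h.2⟩
  · rintro ⟨w, v⟩ ⟨w', v'⟩ hc hc' h
    simp only [Prod.mk_add_mk, Prod.mk.injEq] at h
    exact h3b w w' hc hc' h.1

/-! ### Adjoining an even cyclic factor preserves goodness -/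

lemma Good.adjoin {W : Type*} [AddCommGroup W] (hW : Good W) (M : ℕ) (hM : 0 < M) :
    Good (ZMod (2 * M) × W) := by
  classical
  haveI : NeZero (2 * M) := ⟨by omega⟩
  obtain ⟨τ, c, P, ⟨ht0, ht2⟩, h2a, h2b, h3a, h3b⟩ := hW
  refine ⟨((0 : ZMod (2 * M)), τ), fun u => decide (M ≤ u.1.val),
    fun u => (u.1 + ((if c u.2 then 1 else 0 : ℕ) : ZMod (2 * M)),
      P u.2 + (if (c u.2 = true ∧ ¬ (M ∣ u.1.val + 1)) then τ else 0)), ⟨?_, ?_⟩, ?_, ?_, ?_, ?_⟩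
  · intro h
    exact ht0 (congrArg Prod.snd h)
  · simp [Prod.ext_iff, ht2]
  · -- G2a
    rintro ⟨x, w⟩ ⟨x', w'⟩ hc h
    obtain ⟨a, ha, rfl⟩ := zmod_surj x
    obtain ⟨b, hb, rfl⟩ := zmod_surj x'
    dsimp only at hc h ⊢
    simp only [zmod_val_natCast_of_lt ha, zmod_val_natCast_of_lt hb] at hc h
    have hcab : (M ≤ a) ↔ (M ≤ b) := decide_eq_decide.mp hc
    simp only [Prod.mk_add_mk, Prod.mk.injEq] at h ⊢
    obtain ⟨h1, h2⟩ := h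
    by_cases p : c w = true <;> by_cases q : c w' = true
    · simp only [p, q, if_true, true_and] at h1 h2
      have h1' : ((a + a + 1 : ℕ) : ZMod (2 * M)) = ((b + b + 1 : ℕ) : ZMod (2 * M)) := by
        push_cast at h1 ⊢; linear_combination h1
      have key := zmod_nat_eq_cases (n := 2 * M) (by omega) h1' (by omega) (by omega)
      have hab : a = b := by omega
      subst hab
      exact ⟨rfl, h2a w w' (by rw [p, q]) (add_right_cancel (reassoc4 h2))⟩
    · exfalso
      have q' : c w' = false := by simpa using q
      simp only [p, q', if_true, Bool.false_eq_true, if_false] at h1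
      have h1' : ((a + a + 1 : ℕ) : ZMod (2 * M)) = ((b + b + 0 : ℕ) : ZMod (2 * M)) := by
        push_cast at h1 ⊢; linear_combination h1
      have key := zmod_nat_eq_cases (n := 2 * M) (by omega) h1' (by omega) (by omega)
      omega
    · exfalso
      have p' : c w = false := by simpa using p
      simp only [p', q, if_true, Bool.false_eq_true, if_false] at h1
      have h1' : ((a + a + 0 : ℕ) : ZMod (2 * M)) = ((b + b + 1 : ℕ) : ZMod (2 * M)) := by
        push_cast at h1 ⊢; linear_combination h1
      have key := zmod_nat_eq_cases (n := 2 * M) (by omega) h1' (by omega) (by omega)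
      omega
    · have p' : c w = false := by simpa using p
      have q' : c w' = false := by simpa using q
      simp only [p', q', Bool.false_eq_true, if_false, false_and, Nat.cast_zero, add_zero] at h1 h2
      have h1' : ((a + a : ℕ) : ZMod (2 * M)) = ((b + b : ℕ) : ZMod (2 * M)) := by
        push_cast at h1 ⊢; linear_combination h1
      have key := zmod_nat_eq_cases (n := 2 * M) (by omega) h1' (by omega) (by omega)
      have hab : a = b := by omega
      subst hab
      exact ⟨rfl, h2a w w' (by rw [p', q']) h2⟩
  · -- G2b
    rintro ⟨x, w⟩ ⟨x', w'⟩ hc h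
    obtain ⟨a, ha, rfl⟩ := zmod_surj x
    obtain ⟨b, hb, rfl⟩ := zmod_surj x'
    dsimp only at hc h
    simp only [zmod_val_natCast_of_lt ha, zmod_val_natCast_of_lt hb] at hc h
    have hcab : (M ≤ a) ↔ (M ≤ b) := decide_eq_decide.mp hc
    simp only [Prod.mk_add_mk, Prod.mk.injEq, add_zero] at h
    obtain ⟨h1, h2⟩ := h
    by_cases p : c w = true <;> by_cases q : c w' = true
    · simp only [p, q, if_true, true_and] at h1 h2
      have h1' : ((a + a + 1 : ℕ) : ZMod (2 * M)) = ((b + b + 1 : ℕ) : ZMod (2 * M)) := by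
        push_cast at h1 ⊢; linear_combination h1
      have key := zmod_nat_eq_cases (n := 2 * M) (by omega) h1' (by omega) (by omega)
      have hab : a = b := by omega
      subst hab
      exact h2b w w' (by rw [p, q]) (add_right_cancel (reassoc4' h2))
    · have q' : c w' = false := by simpa using q
      simp only [p, q', if_true, Bool.false_eq_true, if_false] at h1
      have h1' : ((a + a + 1 : ℕ) : ZMod (2 * M)) = ((b + b + 0 : ℕ) : ZMod (2 * M)) := by
        push_cast at h1 ⊢; linear_combination h1
      have key := zmod_nat_eq_cases (n := 2 * M) (by omega) h1' (by omega) (by omega)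
      omega
    · have p' : c w = false := by simpa using p
      simp only [p', q, if_true, Bool.false_eq_true, if_false] at h1
      have h1' : ((a + a + 0 : ℕ) : ZMod (2 * M)) = ((b + b + 1 : ℕ) : ZMod (2 * M)) := by
        push_cast at h1 ⊢; linear_combination h1
      have key := zmod_nat_eq_cases (n := 2 * M) (by omega) h1' (by omega) (by omega)
      omega
    · have p' : c w = false := by simpa using p
      have q' : c w' = false := by simpa using q
      simp only [p', q', Bool.false_eq_true, if_false, false_and, Nat.cast_zero, add_zero] at h1 h2
      have h1' : ((a + a : ℕ) : ZMod (2 * M)) = ((b + b : ℕ) : ZMod (2 * M)) := by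
        push_cast at h1 ⊢; linear_combination h1
      have key := zmod_nat_eq_cases (n := 2 * M) (by omega) h1' (by omega) (by omega)
      have hab : a = b := by omega
      subst hab
      exact h2b w w' (by rw [p', q']) h2
  · -- G3a
    rintro ⟨x, w⟩ ⟨x', w'⟩ hc h
    obtain ⟨a, ha, rfl⟩ := zmod_surj x
    obtain ⟨b, hb, rfl⟩ := zmod_surj x'
    dsimp only at hc h ⊢
    simp only [zmod_val_natCast_of_lt ha, zmod_val_natCast_of_lt hb] at hc h
    have hcab : (M ≤ a) ↔ (M ≤ b) := decide_eq_decide.mp hc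
    simp only [Prod.mk.injEq] at h ⊢
    obtain ⟨h1, h2⟩ := h
    by_cases p : c w = true <;> by_cases q : c w' = true
    · simp only [p, q, if_true, true_and] at h1 h2
      have h1' : ((a + 1 : ℕ) : ZMod (2 * M)) = ((b + 1 : ℕ) : ZMod (2 * M)) := by
        push_cast at h1 ⊢; linear_combination h1
      have hab : a = b := by
        have key := zmod_nat_eq_cases (n := 2 * M) (by omega) h1' (by omega) (by omega)
        omega
      subst hab
      exact ⟨rfl, h3a w w' (by rw [p, q]) (add_right_cancel h2)⟩
    · exfalso
      have q' : c w' = false := by simpa using q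
      simp only [p, q', if_true, true_and, Bool.false_eq_true, if_false, false_and,
        Nat.cast_zero, add_zero] at h1 h2
      have h1' : ((a + 1 : ℕ) : ZMod (2 * M)) = ((b : ℕ) : ZMod (2 * M)) := by
        push_cast at h1 ⊢; linear_combination h1
      have key := zmod_nat_eq_cases (n := 2 * M) (by omega) h1' (by omega) (by omega)
      have hkey : b = a + 1 ∨ (a = 2 * M - 1 ∧ b = 0) := by omega
      rcases hkey with hk | ⟨hk1, hk2⟩
      · -- b = a + 1, so M does not divide a + 1 (else class contradiction)
        have hnd : ¬ (M ∣ (a + 1)) := by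
          intro hd
          rcases dvd_bound_cases hM hd (by omega) (by omega) with h' | h' <;> omega
        rw [if_pos hnd] at h2
        exact h3b w' w q' p h2.symm
      · omega
    · exfalso
      have p' : c w = false := by simpa using p
      simp only [p', q, if_true, true_and, Bool.false_eq_true, if_false, false_and,
        Nat.cast_zero, add_zero] at h1 h2
      have h1' : ((a : ℕ) : ZMod (2 * M)) = ((b + 1 : ℕ) : ZMod (2 * M)) := by
        push_cast at h1 ⊢; linear_combination h1
      have key := zmod_nat_eq_cases (n := 2 * M) (by omega) h1' (by omega) (by omega)
      have hkey : a = b + 1 ∨ (b = 2 * M - 1 ∧ a = 0) := by omega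
      rcases hkey with hk | ⟨hk1, hk2⟩
      · have hnd : ¬ (M ∣ (b + 1)) := by
          intro hd
          rcases dvd_bound_cases hM hd (by omega) (by omega) with h' | h' <;> omega
        rw [if_pos hnd] at h2
        exact h3b w w' p' q h2
      · omega
    · have p' : c w = false := by simpa using p
      have q' : c w' = false := by simpa using q
      simp only [p', q', Bool.false_eq_true, if_false, false_and, Nat.cast_zero, add_zero] at h1 h2
      have hab : a = b := by
        have key := zmod_nat_eq_cases (n := 2 * M) (by omega) h1 (by omega) (by omega)
        omega
      subst hab
      exact ⟨rfl, h3a w w' (by rw [p', q']) h2⟩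
  · -- G3b
    rintro ⟨x, w⟩ ⟨x', w'⟩ hc hc' h
    obtain ⟨a, ha, rfl⟩ := zmod_surj x
    obtain ⟨b, hb, rfl⟩ := zmod_surj x'
    dsimp only at hc hc' h
    simp only [zmod_val_natCast_of_lt ha] at hc h
    simp only [zmod_val_natCast_of_lt hb] at hc' h
    have hca : ¬ (M ≤ a) := by simpa using hc
    have hcb : (M ≤ b) := by simpa using hc'
    simp only [Prod.mk_add_mk, Prod.mk.injEq, add_zero] at h
    obtain ⟨h1, h2⟩ := h
    by_cases p : c w = true <;> by_cases q : c w' = true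
    · simp only [p, q, if_true, true_and] at h1 h2
      have h1' : ((a + 1 : ℕ) : ZMod (2 * M)) = ((b + 1 : ℕ) : ZMod (2 * M)) := by
        push_cast at h1 ⊢; linear_combination h1
      have key := zmod_nat_eq_cases (n := 2 * M) (by omega) h1' (by omega) (by omega)
      omega
    · -- c w = true, c w' = false : forced a = M-1, b = M
      have q' : c w' = false := by simpa using q
      simp only [p, q', if_true, true_and, Bool.false_eq_true, if_false, false_and,
        Nat.cast_zero, add_zero] at h1 h2
      have h1' : ((a + 1 : ℕ) : ZMod (2 * M)) = ((b : ℕ) : ZMod (2 * M)) := by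
        push_cast at h1 ⊢; linear_combination h1
      have key := zmod_nat_eq_cases (n := 2 * M) (by omega) h1' (by omega) (by omega)
      have hk : a = M - 1 ∧ b = M := by omega
      have hd : M ∣ (a + 1) := ⟨1, by omega⟩
      rw [if_neg (by simpa using hd), add_zero] at h2
      exact h3b w' w q' p (invol_swap ht2 h2.symm)
    · -- c w = false, c w' = true : forced a = 0, b = 2M - 1
      have p' : c w = false := by simpa using p
      simp only [p', q, if_true, true_and, Bool.false_eq_true, if_false, false_and,
        Nat.cast_zero, add_zero] at h1 h2
      have h1' : ((a : ℕ) : ZMod (2 * M)) = ((b + 1 : ℕ) : ZMod (2 * M)) := by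
        push_cast at h1 ⊢; linear_combination h1
      have key := zmod_nat_eq_cases (n := 2 * M) (by omega) h1' (by omega) (by omega)
      have hk : a = 0 ∧ b = 2 * M - 1 := by omega
      have hd : M ∣ (b + 1) := ⟨2, by omega⟩
      rw [if_neg (by simpa using hd), add_zero] at h2
      exact h3b w w' p' q h2
    · have p' : c w = false := by simpa using p
      have q' : c w' = false := by simpa using q
      simp only [p', q', Bool.false_eq_true, if_false, false_and, Nat.cast_zero, add_zero] at h1 h2
      have key := zmod_nat_eq_cases (n := 2 * M) (by omega) h1 (by omega) (by omega)
      omega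

/-! ### From goodness to a complete mapping after adjoining an even cyclic factor -/

lemma val_add_one_cases {M a : ℕ} (hM : 0 < M) (ha : a < 2 * M) :
    (((a : ZMod (2 * M)) + 1)).val = if a + 1 = 2 * M then 0 else a + 1 := by
  haveI : NeZero (2 * M) := ⟨by omega⟩
  have he : ((a : ZMod (2 * M)) + 1) = ((a + 1 : ℕ) : ZMod (2 * M)) := by push_cast; ring
  rw [he]
  split
  · next h => rw [h, ZMod.natCast_self, ZMod.val_zero]
  · next h => exact zmod_val_natCast_of_lt (by omega)

lemma Good.cm_adjoin {W : Type*} [AddCommGroup W] [Finite W] (hW : Good W) (M : ℕ)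
    (hM : 0 < M) : HasCM (ZMod (2 * M) × W) := by
  classical
  haveI : NeZero (2 * M) := ⟨by omega⟩
  obtain ⟨τ, c, P, ⟨ht0, ht2⟩, h2a, h2b, h3a, h3b⟩ := hW
  refine ⟨fun u => (u.1 + ((if c u.2 then 1 else 0 : ℕ) : ZMod (2 * M)),
      P u.2 + (if (if c u.2 then ¬ (M ≤ (u.1 + 1).val) else (M ≤ u.1.val)) then τ else 0)),
      ?_, ?_⟩
  · -- φ is injective (hence bijective)
    rw [← Finite.injective_iff_bijective]
    rintro ⟨x, w⟩ ⟨x', w'⟩ h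
    simp only [Prod.mk.injEq] at h ⊢
    obtain ⟨h1, h2⟩ := h
    by_cases p : c w = true <;> by_cases q : c w' = true
    · simp only [p, q, if_true] at h1 h2
      have hx : x = x' := add_right_cancel h1
      subst hx
      exact ⟨rfl, h3a w w' (by rw [p, q]) (add_right_cancel h2)⟩
    · exfalso
      have q' : c w' = false := by simpa using q
      simp only [p, q', if_true, Bool.false_eq_true, if_false, Nat.cast_zero, Nat.cast_one,
        add_zero] at h1 h2
      -- h1 : x + 1 = x', conditions share (x+1).val = x'.val
      rw [h1] at h2
      by_cases s : M ≤ x'.val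
      · rw [if_neg (not_not_intro s), if_pos s, add_zero] at h2
        exact h3b w' w q' p (invol_swap ht2 h2.symm)
      · rw [if_pos s, if_neg s, add_zero] at h2
        exact h3b w' w q' p h2.symm
    · exfalso
      have p' : c w = false := by simpa using p
      simp only [p', q, if_true, Bool.false_eq_true, if_false, Nat.cast_zero, Nat.cast_one,
        add_zero] at h1 h2
      -- h1 : x = x' + 1
      rw [← h1] at h2
      by_cases s : M ≤ x.val
      · rw [if_pos s, if_neg (not_not_intro s), add_zero] at h2
        exact h3b w w' p' q (invol_swap ht2 h2)
      · rw [if_neg s, if_pos s, add_zero] at h2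
        exact h3b w w' p' q h2
    · have p' : c w = false := by simpa using p
      have q' : c w' = false := by simpa using q
      simp only [p', q', Bool.false_eq_true, if_false, Nat.cast_zero, add_zero] at h1 h2
      subst h1
      exact ⟨rfl, h3a w w' (by rw [p', q']) (add_right_cancel h2)⟩
  · -- x ↦ x + φ x is injective (hence bijective)
    rw [← Finite.injective_iff_bijective]
    rintro ⟨x, w⟩ ⟨x', w'⟩ h
    obtain ⟨a, ha, rfl⟩ := zmod_surj x
    obtain ⟨b, hb, rfl⟩ := zmod_surj x'
    simp only [Prod.mk_add_mk, Prod.mk.injEq] at h ⊢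
    obtain ⟨h1, h2⟩ := h
    by_cases p : c w = true <;> by_cases q : c w' = true
    · -- both true
      simp only [p, q, if_true, Nat.cast_one] at h1 h2
      have h1' : ((a + a + 1 : ℕ) : ZMod (2 * M)) = ((b + b + 1 : ℕ) : ZMod (2 * M)) := by
        push_cast at h1 ⊢; linear_combination h1
      have key := zmod_nat_eq_cases (n := 2 * M) (by omega) h1' (by omega) (by omega)
      have hk : a = b ∨ a = b + M ∨ b = a + M := by omega
      have hva := val_add_one_cases hM ha
      have hvb := val_add_one_cases hM hb
      rcases hk with hk | hk | hk
      · subst hk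
        exact ⟨rfl, h2a w w' (by rw [p, q]) (add_right_cancel (reassoc4 h2))⟩
      · exfalso
        by_cases s1 : M ≤ (((a : ZMod (2 * M))) + 1).val <;>
          by_cases s2 : M ≤ (((b : ZMod (2 * M))) + 1).val
        · rw [hva] at s1; rw [hvb] at s2
          split at s1 <;> split at s2 <;> omega
        · rw [if_neg (not_not_intro s1), if_pos s2] at h2
          have h2' := reassoc4 h2
          rw [add_zero] at h2'
          exact h2b w w' (by rw [p, q]) h2'
        · rw [if_pos s1, if_neg (not_not_intro s2)] at h2
          have h2' := reassoc4 h2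
          rw [add_zero] at h2'
          exact h2b w' w (by rw [p, q]) h2'.symm
        · rw [hva] at s1; rw [hvb] at s2
          split at s1 <;> split at s2 <;> omega
      · exfalso
        by_cases s1 : M ≤ (((a : ZMod (2 * M))) + 1).val <;>
          by_cases s2 : M ≤ (((b : ZMod (2 * M))) + 1).val
        · rw [hva] at s1; rw [hvb] at s2
          split at s1 <;> split at s2 <;> omega
        · rw [if_neg (not_not_intro s1), if_pos s2] at h2
          have h2' := reassoc4 h2
          rw [add_zero] at h2'
          exact h2b w w' (by rw [p, q]) h2'
        · rw [if_pos s1, if_neg (not_not_intro s2)] at h2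
          have h2' := reassoc4 h2
          rw [add_zero] at h2'
          exact h2b w' w (by rw [p, q]) h2'.symm
        · rw [hva] at s1; rw [hvb] at s2
          split at s1 <;> split at s2 <;> omega
    · exfalso
      have q' : c w' = false := by simpa using q
      simp only [p, q', if_true, Bool.false_eq_true, if_false, Nat.cast_zero, Nat.cast_one,
        add_zero] at h1
      have h1' : ((a + a + 1 : ℕ) : ZMod (2 * M)) = ((b + b : ℕ) : ZMod (2 * M)) := by
        push_cast at h1 ⊢; linear_combination h1
      have key := zmod_nat_eq_cases (n := 2 * M) (by omega) h1' (by omega) (by omega)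
      omega
    · exfalso
      have p' : c w = false := by simpa using p
      simp only [p', q, if_true, Bool.false_eq_true, if_false, Nat.cast_zero, Nat.cast_one,
        add_zero] at h1
      have h1' : ((a + a : ℕ) : ZMod (2 * M)) = ((b + b + 1 : ℕ) : ZMod (2 * M)) := by
        push_cast at h1 ⊢; linear_combination h1
      have key := zmod_nat_eq_cases (n := 2 * M) (by omega) h1' (by omega) (by omega)
      omega
    · -- both false
      have p' : c w = false := by simpa using p
      have q' : c w' = false := by simpa using q
      simp only [p', q', Bool.false_eq_true, if_false, Nat.cast_zero, add_zero] at h1 h2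
      have h1' : ((a + a : ℕ) : ZMod (2 * M)) = ((b + b : ℕ) : ZMod (2 * M)) := by
        push_cast at h1 ⊢; linear_combination h1
      have key := zmod_nat_eq_cases (n := 2 * M) (by omega) h1' (by omega) (by omega)
      have hk : a = b ∨ a = b + M ∨ b = a + M := by omega
      rcases hk with hk | hk | hk
      · subst hk
        exact ⟨rfl, h2a w w' (by rw [p', q']) (add_right_cancel (reassoc4 h2))⟩
      · exfalso
        rw [zmod_val_natCast_of_lt ha, zmod_val_natCast_of_lt hb] at h2
        by_cases s1 : M ≤ a <;> by_cases s2 : M ≤ b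
        · omega
        · rw [if_pos s1, if_neg s2] at h2
          have h2' := reassoc4 h2
          rw [add_zero] at h2'
          exact h2b w' w (by rw [p', q']) h2'.symm
        · omega
        · omega
      · exfalso
        rw [zmod_val_natCast_of_lt ha, zmod_val_natCast_of_lt hb] at h2
        by_cases s1 : M ≤ a <;> by_cases s2 : M ≤ b
        · omega
        · omega
        · rw [if_neg s1, if_pos s2] at h2
          have h2' := reassoc4 h2
          rw [add_zero] at h2'
          exact h2b w w' (by rw [p', q']) h2'
        · omega

/-! ### Peeling an even cyclic factor off a finite abelian group -/

def addEquivPiSplit {ι : Type} [DecidableEq ι] (F : ι → Type*) [∀ i, AddCommMonoid (F i)]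
    (i₀ : ι) : (∀ i, F i) ≃+ F i₀ × (∀ j : {j // j ≠ i₀}, F j) :=
  { Equiv.piSplitAt i₀ F with map_add' := fun _ _ => rfl }

lemma peel_even (G : Type) [AddCommGroup G] [Fintype G] (hE : Even (Fintype.card G)) :
    ∃ (n : ℕ) (G' : Type) (_ : AddCommGroup G') (_ : Fintype G'),
      Even n ∧ 0 < n ∧ Nonempty (G ≃+ ZMod n × G') := by
  classical
  obtain ⟨ι, hι, p, hp, e, ⟨f⟩⟩ := AddCommGroup.equiv_directSum_zmod_of_finite G
  haveI : ∀ i, NeZero (p i ^ e i) := fun i => ⟨(pow_pos (hp i).pos (e i)).ne'⟩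
  have f2 : G ≃+ ∀ i, ZMod (p i ^ e i) := f.trans (DirectSum.addEquivProd _)
  have hcardprod : Fintype.card G = ∏ i, p i ^ e i := by
    rw [Fintype.card_congr f2.toEquiv, Fintype.card_pi]
    exact Finset.prod_congr rfl (fun i _ => ZMod.card _)
  have hex : ∃ i : ι, Even (p i ^ e i) := by
    by_contra hc
    push_neg at hc
    have hodd : Odd (∏ i, (p i ^ e i)) := by
      refine Finset.prod_induction _ Odd (fun a b ha hb => ha.mul hb) odd_one ?_
      intro i _
      exact Nat.not_even_iff_odd.mp (hc i)
    rw [← hcardprod] at hodd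
    exact (Nat.not_even_iff_odd.mpr hodd) hE
  obtain ⟨i₀, hi₀⟩ := hex
  refine ⟨p i₀ ^ e i₀, ∀ j : {j // j ≠ i₀}, ZMod (p j ^ e j), inferInstance, inferInstance,
    hi₀, pow_pos (hp i₀).pos _, ⟨f2.trans (addEquivPiSplit _ i₀)⟩⟩

/-! ### Every even finite abelian group is good -/

lemma good_of_even_aux : ∀ (N : ℕ) (G : Type) [AddCommGroup G] [Fintype G],
    Fintype.card G ≤ N → Even (Fintype.card G) → Good G := by
  intro N
  induction N with
  | zero =>
    intro G _ _ hle _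
    have := Fintype.card_pos (α := G)
    omega
  | succ N ih =>
    intro G _ _ hle hE
    obtain ⟨n, G', _, _, hEn, hn0, ⟨e⟩⟩ := peel_even G hE
    obtain ⟨M, rfl⟩ : ∃ M, n = 2 * M := by
      obtain ⟨k, hk⟩ := hEn; exact ⟨k, by omega⟩
    have hM : 0 < M := by omega
    haveI : NeZero (2 * M) := ⟨by omega⟩
    have hcard : Fintype.card G = 2 * M * Fintype.card G' := by
      rw [Fintype.card_congr e.toEquiv, Fintype.card_prod, ZMod.card]
    by_cases hodd : Odd (Fintype.card G')
    · exact Good.congr e.symm ((good_zmod M hM).prod_cm (hasCM_of_odd hodd))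
    · have hE' : Even (Fintype.card G') := Nat.not_odd_iff_even.mp hodd
      have hle' : Fintype.card G' ≤ N := by
        have h2 : 2 * Fintype.card G' ≤ 2 * M * Fintype.card G' := by
          have := Nat.mul_le_mul_right (Fintype.card G') (show 2 ≤ 2 * M by omega)
          simpa using this
        have := Fintype.card_pos (α := G')
        omega
      exact Good.congr e.symm ((ih G' hle' hE').adjoin M hM)

lemma good_of_even (G : Type) [AddCommGroup G] [Fintype G] (hE : Even (Fintype.card G)) :
    Good G :=
  good_of_even_aux (Fintype.card G) G le_rfl hE

/-! ### The unique involution in (even cyclic) × (odd) -/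

lemma exists_unique_inv_cyclic_odd (G' : Type) [AddCommGroup G'] [Fintype G'] (M : ℕ)
    (hM : 0 < M) (hodd : Odd (Fintype.card G')) :
    ∃! ι : ZMod (2 * M) × G', ι ≠ 0 ∧ ι + ι = 0 := by
  haveI : NeZero (2 * M) := ⟨by omega⟩
  refine ⟨(((M : ℕ) : ZMod (2 * M)), 0), ⟨?_, ?_⟩, ?_⟩
  · intro h
    have h1 : ((M : ℕ) : ZMod (2 * M)) = 0 := congrArg Prod.fst h
    have := congrArg ZMod.val h1
    rw [zmod_val_natCast_of_lt (by omega), ZMod.val_zero] at this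
    omega
  · have : ((M : ℕ) : ZMod (2 * M)) + ((M : ℕ) : ZMod (2 * M)) = 0 := by
      rw [← Nat.cast_add]
      have : M + M = 2 * M := by ring
      rw [this, ZMod.natCast_self]
    simp [Prod.ext_iff, this]
  · rintro ⟨x, y⟩ ⟨hne, hsum⟩
    simp only [Prod.mk_add_mk, Prod.mk.injEq, Prod.mk_eq_zero] at hsum
    have hy : y = 0 := double_inj_of_odd hodd hsum.2
    subst hy
    have hx : x ≠ 0 := by
      intro h; exact hne (by simp [h])
    obtain ⟨a, ha, rfl⟩ := zmod_surj x
    have h1 : ((a + a : ℕ) : ZMod (2 * M)) = ((0 : ℕ) : ZMod (2 * M)) := by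
      push_cast
      linear_combination hsum.1
    have key := zmod_nat_eq_cases (n := 2 * M) (by omega) h1 (by omega) (by omega)
    have ha0 : a ≠ 0 := by
      intro h; subst h; exact hx (by norm_num)
    have : a = M := by omega
    subst this
    rfl

lemma exists_unique_transfer {G H : Type*} [AddCommGroup G] [AddCommGroup H] (e : G ≃+ H)
    (h : ∃! ι : G, ι ≠ 0 ∧ ι + ι = 0) : ∃! ι : H, ι ≠ 0 ∧ ι + ι = 0 := by
  obtain ⟨ι, ⟨h1, h2⟩, h3⟩ := h
  refine ⟨e ι, ⟨?_, ?_⟩, ?_⟩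
  · intro hc
    exact h1 (by simpa using e.injective (by simpa using hc))
  · rw [← map_add, h2, map_zero]
  · rintro y ⟨hy1, hy2⟩
    have : e.symm y = ι := by
      apply h3
      constructor
      · intro hc
        exact hy1 (by simpa using e.symm.injective (by simpa using hc))
      · apply e.injective
        simpa [map_add] using hy2
    rw [← this, AddEquiv.apply_symm_apply]

/-! ### Paige's theorem (abelian case) -/

lemma hasCM_of_not_unique_involution (G : Type) [AddCommGroup G] [Fintype G]
    (h : ¬ ∃! ι : G, ι ≠ 0 ∧ ι + ι = 0) : HasCM G := by
  by_cases hodd : Odd (Fintype.card G)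
  · exact hasCM_of_odd hodd
  · have hE : Even (Fintype.card G) := Nat.not_odd_iff_even.mp hodd
    obtain ⟨n, G', _, _, hEn, hn0, ⟨e⟩⟩ := peel_even G hE
    obtain ⟨M, rfl⟩ : ∃ M, n = 2 * M := by
      obtain ⟨k, hk⟩ := hEn; exact ⟨k, by omega⟩
    have hM : 0 < M := by omega
    by_cases hodd' : Odd (Fintype.card G')
    · exact absurd (exists_unique_transfer e.symm
        (exists_unique_inv_cyclic_odd G' M hM hodd')) h
    · have hE' : Even (Fintype.card G') := Nat.not_odd_iff_even.mp hodd'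
      exact HasCM.congr e.symm ((good_of_even G' hE').cm_adjoin M hM)

/-! ### Cardinality of the pullback of a subgroup of a quotient -/

lemma card_comap_mk' {A : Type*} [AddCommGroup A] [Finite A] (N : AddSubgroup A)
    (S : AddSubgroup (A ⧸ N)) :
    Nat.card (S.comap (QuotientAddGroup.mk' N)) = Nat.card S * Nat.card N := by
  classical
  set K := S.comap (QuotientAddGroup.mk' N) with hK
  have hNK : N ≤ K := by
    intro x hx
    have : QuotientAddGroup.mk' N x = 0 := (QuotientAddGroup.eq_zero_iff x).mpr hx
    simp only [hK, AddSubgroup.mem_comap, this]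
    exact S.zero_mem
  have hmem : ∀ k : A, k ∈ K → QuotientAddGroup.mk' N k ∈ S := fun k hk => hk
  let g : K →+ S := AddMonoidHom.codRestrict ((QuotientAddGroup.mk' N).domRestrict K) S
    (fun k => hmem k k.2)
  have hgsurj : Function.Surjective g := by
    rintro ⟨s, hs⟩
    obtain ⟨a, ha⟩ := QuotientAddGroup.mk'_surjective N s
    have haK : a ∈ K := by simp [hK, AddSubgroup.mem_comap, ha, hs]
    exact ⟨⟨a, haK⟩, Subtype.ext (by exact ha)⟩
  have hker : g.ker = N.addSubgroupOf K := by
    ext ⟨a, haK⟩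
    simp only [AddMonoidHom.mem_ker, AddSubgroup.mem_addSubgroupOf]
    constructor
    · intro h
      have : QuotientAddGroup.mk' N a = 0 := congrArg Subtype.val h
      exact (QuotientAddGroup.eq_zero_iff a).mp this
    · intro h
      apply Subtype.ext
      exact (QuotientAddGroup.eq_zero_iff a).mpr h
  have e1 : (K ⧸ g.ker) ≃+ S := QuotientAddGroup.quotientKerEquivOfSurjective g hgsurj
  have e2 : (g.ker : AddSubgroup K) ≃+ N := by
    rw [hker]; exact AddSubgroup.addSubgroupOfEquivOfLe hNK
  calc Nat.card K = Nat.card (K ⧸ g.ker) * Nat.card g.ker :=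
        AddSubgroup.card_eq_card_quotient_mul_card_addSubgroup g.ker
    _ = Nat.card S * Nat.card N := by rw [Nat.card_congr e1.toEquiv, Nat.card_congr e2.toEquiv]

/-! ### Converse of Lagrange's theorem for finite abelian groups -/

lemma conv_lagrange (d : ℕ) : ∀ (A : Type) [AddCommGroup A] [Finite A],
    d ∣ Nat.card A → ∃ H : AddSubgroup A, Nat.card H = d := by
  induction d using Nat.strong_induction_on with
  | _ d ih =>
    intro A _ _ hdvd
    rcases eq_or_ne d 1 with rfl | hd1
    · exact ⟨⊥, by simp⟩
    rcases eq_or_ne d 0 with rfl | hd0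
    · have h0 : Nat.card A = 0 := Nat.eq_zero_of_zero_dvd hdvd
      have := Nat.card_pos (α := A)
      omega
    haveI := Fintype.ofFinite A
    have hp : (d.minFac).Prime := Nat.minFac_prime hd1
    haveI : Fact (d.minFac).Prime := ⟨hp⟩
    have hpd : d.minFac ∣ d := Nat.minFac_dvd d
    have hpcard : d.minFac ∣ Fintype.card A := by
      rw [← Nat.card_eq_fintype_card]
      exact hpd.trans hdvd
    obtain ⟨x, hx⟩ := exists_prime_addOrderOf_dvd_card (d.minFac) hpcard
    set N := AddSubgroup.zmultiples x with hN
    have hcN : Nat.card N = d.minFac := by rw [hN, Nat.card_zmultiples, hx]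
    have hcard_eq : Nat.card A = Nat.card (A ⧸ N) * Nat.card N :=
      AddSubgroup.card_eq_card_quotient_mul_card_addSubgroup N
    have hp0 : 0 < d.minFac := hp.pos
    have hdvd' : d / d.minFac ∣ Nat.card (A ⧸ N) := by
      obtain ⟨c, hc⟩ := hdvd
      refine ⟨c, ?_⟩
      apply Nat.eq_of_mul_eq_mul_left hp0
      calc d.minFac * Nat.card (A ⧸ N) = Nat.card (A ⧸ N) * Nat.card N := by rw [hcN]; ring
        _ = Nat.card A := hcard_eq.symm
        _ = d * c := hc
        _ = d.minFac * (d / d.minFac * c) := by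
            rw [← mul_assoc, Nat.mul_div_cancel' hpd]
    obtain ⟨S, hS⟩ := ih (d / d.minFac) (Nat.div_lt_self (by omega) hp.one_lt) (A ⧸ N) hdvd'
    refine ⟨S.comap (QuotientAddGroup.mk' N), ?_⟩
    rw [card_comap_mk', hS, hcN, Nat.div_mul_cancel hpd]

/-! ### The core partition construction via coset transversals -/

lemma core_partition (A : Type) [AddCommGroup A] [Fintype A] [DecidableEq A]
    (q r : ℕ) (hq : 0 < q) (hcard : Fintype.card A = q * r)
    (H : AddSubgroup A) [Fintype H] [Fintype (A ⧸ H)] [DecidableEq (A ⧸ H)]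
    (hH : Nat.card H = q)
    (hσ : ∑ c : A ⧸ H, c = 0)
    (π : (A ⧸ H) → H → H)
    (hbij : ∀ c, Function.Bijective (π c))
    (hsum : ∀ i : H, ∑ c : A ⧸ H, π c i = 0) :
    ∃ P : Fin q → Finset A,
      (∀ i j, i ≠ j → Disjoint (P i) (P j)) ∧
      Finset.univ.biUnion P = Finset.univ ∧
      ∀ i, (P i).card = r ∧ ∑ a ∈ P i, a = 0 := by
  classical
  have hQcard : Fintype.card (A ⧸ H) = r := by
    have h1 : Nat.card A = Nat.card (A ⧸ H) * Nat.card H :=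
      AddSubgroup.card_eq_card_quotient_mul_card_addSubgroup H
    rw [hH, Nat.card_eq_fintype_card, Nat.card_eq_fintype_card, hcard] at h1
    have h2 : r * q = Fintype.card (A ⧸ H) * q := (Nat.mul_comm r q).trans h1
    exact (Nat.eq_of_mul_eq_mul_right hq h2).symm
  set T : A := ∑ c : A ⧸ H, Quotient.out c with hT
  have hmkout : ∀ c : A ⧸ H, QuotientAddGroup.mk' H (Quotient.out c) = c := fun c =>
    QuotientAddGroup.out_eq' c
  have hTmem : T ∈ H := by
    rw [← QuotientAddGroup.eq_zero_iff]
    have : QuotientAddGroup.mk' H T = ∑ c : A ⧸ H, QuotientAddGroup.mk' H (Quotient.out c) :=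
      map_sum _ _ _
    rw [show ((T : A) : A ⧸ H) = QuotientAddGroup.mk' H T from rfl, this]
    rw [Finset.sum_congr rfl (fun c _ => hmkout c)]
    exact hσ
  set rep : (A ⧸ H) → A := fun c => Quotient.out c - (if c = (0 : A ⧸ H) then T else 0)
    with hrepdef
  have hT0 : QuotientAddGroup.mk' H T = 0 := (QuotientAddGroup.eq_zero_iff T).mpr hTmem
  have hrep_mk : ∀ c, QuotientAddGroup.mk' H (rep c) = c := by
    intro c
    simp only [hrepdef, map_sub, apply_ite (QuotientAddGroup.mk' H), map_zero,
      hT0, ite_self, sub_zero]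
    exact hmkout c
  have hrep_sum : ∑ c : A ⧸ H, rep c = 0 := by
    rw [hrepdef]
    rw [Finset.sum_sub_distrib]
    rw [Finset.sum_ite_eq' Finset.univ (0 : A ⧸ H) (fun _ => T)]
    simp [← hT]
  have hmk : ∀ (c : A ⧸ H) (i : H), QuotientAddGroup.mk' H (rep c + ((π c i : H) : A)) = c := by
    intro c i
    have hx : QuotientAddGroup.mk' H ((π c i : H) : A) = 0 :=
      (QuotientAddGroup.eq_zero_iff _).mpr (π c i).2
    rw [map_add, hrep_mk, hx, add_zero]
  set B : H → Finset A := fun i => Finset.univ.image (fun c : A ⧸ H => rep c + ((π c i : H) : A))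
    with hBdef
  have hinj : ∀ i : H, Function.Injective (fun c : A ⧸ H => rep c + ((π c i : H) : A)) := by
    intro i c c' h
    have := congrArg (QuotientAddGroup.mk' H) h
    rwa [hmk, hmk] at this
  have hBcard : ∀ i, (B i).card = r := by
    intro i
    rw [hBdef]
    rw [Finset.card_image_of_injective _ (hinj i), Finset.card_univ, hQcard]
  have hBsum : ∀ i, ∑ a ∈ B i, a = 0 := by
    intro i
    rw [hBdef]
    rw [Finset.sum_image (fun c _ c' _ h => hinj i h)]
    rw [Finset.sum_add_distrib, hrep_sum, zero_add]
    have : ∑ c : A ⧸ H, ((π c i : H) : A) = ((∑ c : A ⧸ H, π c i : H) : A) :=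
      (map_sum H.subtype (fun c => π c i) Finset.univ).symm
    rw [this, hsum i, AddSubgroup.coe_zero]
  have hBdisj : ∀ i j : H, i ≠ j → Disjoint (B i) (B j) := by
    intro i j hij
    rw [Finset.disjoint_left]
    intro a hai haj
    rw [hBdef, Finset.mem_image] at hai haj
    obtain ⟨c, _, hc⟩ := hai
    obtain ⟨c', _, hc'⟩ := haj
    have hcc : c = c' := by
      have h1 := congrArg (QuotientAddGroup.mk' H) (hc.trans hc'.symm)
      rwa [hmk, hmk] at h1
    subst hcc
    have h2 : ((π c i : H) : A) = ((π c j : H) : A) := by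
      have := hc.trans hc'.symm
      exact add_left_cancel this
    exact hij ((hbij c).injective (Subtype.ext h2))
  have hBcover : ∀ a : A, ∃ i : H, a ∈ B i := by
    intro a
    set c : A ⧸ H := QuotientAddGroup.mk' H a with hc
    have hmem : a - rep c ∈ H := by
      rw [← QuotientAddGroup.eq_zero_iff]
      rw [show ((a - rep c : A) : A ⧸ H) = QuotientAddGroup.mk' H (a - rep c) from rfl]
      rw [map_sub, hrep_mk, ← hc, sub_self]
    obtain ⟨i, hi⟩ := (hbij c).surjective ⟨a - rep c, hmem⟩
    refine ⟨i, ?_⟩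
    rw [hBdef, Finset.mem_image]
    exact ⟨c, Finset.mem_univ c, by rw [hi]; exact add_sub_self' (rep c) a⟩
  have hHcard : Fintype.card H = q := by rw [← Nat.card_eq_fintype_card, hH]
  set ε : H ≃ Fin q := Fintype.equivFinOfCardEq hHcard with hε
  refine ⟨fun j => B (ε.symm j), ?_, ?_, ?_⟩
  · intro i j hij
    exact hBdisj _ _ (fun h => hij (by rw [← Equiv.apply_symm_apply ε i, h,
      Equiv.apply_symm_apply]))
  · apply Finset.eq_univ_of_forall
    intro a
    rw [Finset.mem_biUnion]
    obtain ⟨i, hi⟩ := hBcover a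
    exact ⟨ε i, Finset.mem_univ _, by rwa [Equiv.symm_apply_apply]⟩
  · intro j
    exact ⟨hBcard _, hBsum _⟩

/-! ### Families of permutations with zero column sums -/

lemma pi_exists_even (K : Type*) [AddCommGroup K] (Q : Type*) [Fintype Q] [DecidableEq Q]
    (r : ℕ) (hr : Fintype.card Q = r) (hreven : Even r) :
    ∃ π : Q → K → K, (∀ c, Function.Bijective (π c)) ∧ ∀ i, ∑ c : Q, π c i = 0 := by
  obtain ⟨r2, hr2⟩ := hreven
  obtain ⟨F, hFsub, hFcard⟩ := Finset.exists_subset_card_eq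
    (s := (Finset.univ : Finset Q)) (n := r2) (by rw [Finset.card_univ, hr]; omega)
  refine ⟨fun c => if c ∈ F then id else Neg.neg, ?_, ?_⟩
  · intro c
    dsimp only
    split
    · exact Function.bijective_id
    · exact neg_involutive.bijective
  · intro i
    have : ∀ c : Q, (if c ∈ F then (id : K → K) else Neg.neg) i
        = (if c ∈ F then i else -i) := by
      intro c; split <;> rfl
    rw [Finset.sum_congr rfl (fun c _ => this c)]
    rw [Finset.sum_ite]
    have h1 : Finset.univ.filter (· ∈ F) = F := by
      ext c; simp [hFsub]
    have h2 : (Finset.univ.filter (fun c => ¬ (c ∈ F))).card = r2 := by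
      rw [Finset.filter_not, Finset.card_sdiff_of_subset]
      · rw [h1, Finset.card_univ, hr, hFcard]; omega
      · rw [h1]; exact hFsub
    rw [h1]
    simp only [Finset.sum_const, hFcard, h2]
    rw [smul_neg]
    abel

lemma pi_exists_odd (K : Type*) [AddCommGroup K] (hcm : HasCM K)
    (Q : Type*) [Fintype Q] [DecidableEq Q]
    (r : ℕ) (hr : Fintype.card Q = r) (hrodd : Odd r) (hr3 : 3 ≤ r) :
    ∃ π : Q → K → K, (∀ c, Function.Bijective (π c)) ∧ ∀ i, ∑ c : Q, π c i = 0 := by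
  obtain ⟨φ, hφb, hφs⟩ := hcm
  obtain ⟨F3, hF3sub, hF3card⟩ := Finset.exists_subset_card_eq
    (s := (Finset.univ : Finset Q)) (n := 3) (by rw [Finset.card_univ, hr]; omega)
  obtain ⟨x, y, z, hxy, hxz, hyz, hF3⟩ := Finset.card_eq_three.mp hF3card
  obtain ⟨l, hl⟩ : ∃ l, r = 2 * l + 3 := by
    obtain ⟨k, hk⟩ := hrodd; exact ⟨k - 1, by omega⟩
  set Rest : Finset Q := Finset.univ \ F3 with hRest
  have hRestcard : Rest.card = 2 * l := by
    rw [hRest, Finset.card_sdiff_of_subset (Finset.subset_univ F3), Finset.card_univ, hr, hF3card]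
    omega
  obtain ⟨F', hF'sub, hF'card⟩ := Finset.exists_subset_card_eq
    (s := Rest) (n := l) (by omega)
  set π : Q → K → K := fun c =>
    if c = x then id else if c = y then φ else if c = z then (fun i => -(i + φ i))
    else if c ∈ F' then id else Neg.neg with hπ
  refine ⟨π, ?_, ?_⟩
  · intro c
    rw [hπ]
    dsimp only
    split
    · exact Function.bijective_id
    split
    · exact hφb
    split
    · exact Function.Bijective.comp neg_involutive.bijective hφs
    split
    · exact Function.bijective_id
    · exact neg_involutive.bijective
  · intro i
    have hsplit : ∑ c : Q, π c i = (∑ c ∈ Rest, π c i) + (∑ c ∈ F3, π c i) := by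
      rw [hRest]
      exact (Finset.sum_sdiff (Finset.subset_univ F3)).symm
    rw [hsplit]
    have hπx : π x = id := by rw [hπ]; dsimp only; rw [if_pos rfl]
    have hπy : π y = φ := by
      rw [hπ]; dsimp only; rw [if_neg hxy.symm, if_pos rfl]
    have hπz : π z = fun j => -(j + φ j) := by
      rw [hπ]; dsimp only; rw [if_neg hxz.symm, if_neg hyz.symm, if_pos rfl]
    have hF3sum : ∑ c ∈ F3, π c i = 0 := by
      rw [hF3]
      rw [Finset.sum_insert (by simp [hxy, hxz]), Finset.sum_insert (by simp [hyz]),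
        Finset.sum_singleton]
      rw [hπx, hπy, hπz]
      show i + (φ i + -(i + φ i)) = 0
      abel
    have hRestsum : ∑ c ∈ Rest, π c i = 0 := by
      have hne : ∀ c ∈ Rest, π c i = (if c ∈ F' then i else -i) := by
        intro c hc
        rw [hRest, Finset.mem_sdiff, hF3] at hc
        have hcx : c ≠ x := fun h => hc.2 (by rw [h]; simp)
        have hcy : c ≠ y := fun h => hc.2 (by rw [h]; simp)
        have hcz : c ≠ z := fun h => hc.2 (by rw [h]; simp)
        rw [hπ]
        dsimp only
        rw [if_neg hcx, if_neg hcy, if_neg hcz]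
        split <;> rfl
      rw [Finset.sum_congr rfl hne]
      rw [Finset.sum_ite]
      have h1 : Rest.filter (· ∈ F') = F' := by
        ext c; simp only [Finset.mem_filter]
        exact ⟨fun h => h.2, fun h => ⟨hF'sub h, h⟩⟩
      have h2 : (Rest.filter (fun c => ¬ (c ∈ F'))).card = l := by
        rw [Finset.filter_not, Finset.card_sdiff_of_subset]
        · rw [h1, hRestcard, hF'card]; omega
        · rw [h1]; exact hF'sub
      rw [h1]
      simp only [Finset.sum_const, hF'card, h2]
      rw [smul_neg]
      abel
    rw [hF3sum, hRestsum, add_zero]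

/-! ### Sum of all elements of an exponent-2 group of order 4 -/

lemma sum_univ_eq_zero_of_exp2_card4 (Q : Type*) [AddCommGroup Q] [Fintype Q]
    (h2 : ∀ x : Q, x + x = 0) (h4 : Fintype.card Q = 4) : ∑ x : Q, x = 0 := by
  classical
  haveI : Nontrivial Q := Fintype.one_lt_card_iff_nontrivial.mp (by omega)
  obtain ⟨u, hu⟩ := exists_ne (0 : Q)
  have hcard2 : ({0, u} : Finset Q).card ≤ 2 := by
    apply le_trans (Finset.card_insert_le _ _)
    simp
  have hex : ∃ v : Q, v ∉ ({0, u} : Finset Q) := by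
    by_contra hc
    push_neg at hc
    have : (Finset.univ : Finset Q) ⊆ {0, u} := fun v _ => hc v
    have := Finset.card_le_card this
    rw [Finset.card_univ, h4] at this
    omega
  obtain ⟨v, hv⟩ := hex
  simp only [Finset.mem_insert, Finset.mem_singleton] at hv
  push_neg at hv
  obtain ⟨hv0, hvu⟩ := hv
  have huv0 : u + v ≠ 0 := by
    intro h
    have : v = -u := by rw [← neg_eq_of_add_eq_zero_right h]
    have hnu : -u = u := neg_eq_of_add_eq_zero_right (h2 u)
    exact hvu (by rw [this, hnu])
  have huvu : u + v ≠ u := by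
    intro h
    apply hv0
    have h' : u + v = u + 0 := by rw [h, add_zero]
    exact add_left_cancel h'
  have huvv : u + v ≠ v := by
    intro h
    apply hu
    have h' : u + v = 0 + v := by rw [h, zero_add]
    exact add_right_cancel h'
  set S : Finset Q := {0, u, v, u + v} with hS
  have hScard : S.card = 4 := by
    rw [hS]
    rw [Finset.card_insert_of_notMem (by simp [hu.symm, hv0.symm, huv0.symm]),
      Finset.card_insert_of_notMem (by simp [hvu.symm, huvu.symm]),
      Finset.card_insert_of_notMem (by simp [huvv.symm]),
      Finset.card_singleton]
  have hSuniv : S = Finset.univ := Finset.eq_univ_of_card S (by rw [hScard, h4])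
  rw [← hSuniv, hS]
  rw [Finset.sum_insert (by simp [hu.symm, hv0.symm, huv0.symm]),
    Finset.sum_insert (by simp [hvu.symm, huvu.symm]),
    Finset.sum_insert (by simp [huvv.symm]),
    Finset.sum_singleton]
  have h3 : u + (v + (u + v)) = (u + u) + (v + v) := by abel
  rw [zero_add, h3, h2, h2, add_zero]

/-! ### Merging blocks of a partition -/

lemma merge_partition (A : Type) [AddCommGroup A] [DecidableEq A] [Fintype A]
    (q w r' : ℕ) (P' : Fin (q * w) → Finset A)
    (hdisj : ∀ i j, i ≠ j → Disjoint (P' i) (P' j))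
    (hcov : Finset.univ.biUnion P' = Finset.univ)
    (hcs : ∀ i, (P' i).card = r' ∧ ∑ a ∈ P' i, a = 0) :
    ∃ P : Fin q → Finset A,
      (∀ i j, i ≠ j → Disjoint (P i) (P j)) ∧
      Finset.univ.biUnion P = Finset.univ ∧
      ∀ i, (P i).card = w * r' ∧ ∑ a ∈ P i, a = 0 := by
  classical
  set E := finProdFinEquiv (m := q) (n := w) with hE
  refine ⟨fun i => Finset.univ.biUnion (fun k : Fin w => P' (E (i, k))), ?_, ?_, ?_⟩
  · intro i j hij
    rw [Finset.disjoint_biUnion_left]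
    intro k _
    rw [Finset.disjoint_biUnion_right]
    intro k' _
    exact hdisj _ _ (fun h => hij (congrArg Prod.fst (E.injective h)))
  · apply Finset.eq_univ_of_forall
    intro a
    have : a ∈ Finset.univ.biUnion P' := by rw [hcov]; exact Finset.mem_univ a
    rw [Finset.mem_biUnion] at this
    obtain ⟨m, _, hm⟩ := this
    rw [Finset.mem_biUnion]
    refine ⟨(E.symm m).1, Finset.mem_univ _, ?_⟩
    rw [Finset.mem_biUnion]
    refine ⟨(E.symm m).2, Finset.mem_univ _, ?_⟩
    rwa [show ((E.symm m).1, (E.symm m).2) = E.symm m from rfl, Equiv.apply_symm_apply]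
  · intro i
    constructor
    · rw [Finset.card_biUnion]
      · rw [Finset.sum_congr rfl (fun k _ => (hcs (E (i, k))).1)]
        rw [Finset.sum_const, Finset.card_univ, Fintype.card_fin, smul_eq_mul]
      · intro k _ k' _ hkk
        exact hdisj _ _ (fun h => hkk (congrArg Prod.snd (E.injective h)))
    · rw [Finset.sum_biUnion]
      · rw [Finset.sum_congr rfl (fun k _ => (hcs (E (i, k))).2), Finset.sum_const, smul_zero]
      · intro k _ k' _ hkk
        exact hdisj _ _ (fun h => hkk (congrArg Prod.snd (E.injective h)))

/-! ### Zero-sum partitions : odd block size -/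

lemma zsp_odd (A : Type) [AddCommGroup A] [Fintype A] [DecidableEq A]
    (q r : ℕ) (hq : 0 < q) (hr3 : 3 ≤ r) (hrodd : Odd r)
    (hcard : Fintype.card A = q * r)
    (hinv : ¬ ∃! ι : A, ι ≠ 0 ∧ ι + ι = 0) :
    ∃ P : Fin q → Finset A,
      (∀ i j, i ≠ j → Disjoint (P i) (P j)) ∧
      Finset.univ.biUnion P = Finset.univ ∧
      ∀ i, (P i).card = r ∧ ∑ a ∈ P i, a = 0 := by
  classical
  have hdvd : q ∣ Nat.card A := by
    rw [Nat.card_eq_fintype_card, hcard]; exact dvd_mul_right q r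
  obtain ⟨H, hH⟩ := conv_lagrange q A hdvd
  haveI : Fintype H := Fintype.ofFinite H
  haveI : Fintype (A ⧸ H) := Fintype.ofFinite _
  haveI : DecidableEq (A ⧸ H) := Classical.decEq _
  have hQcard : Fintype.card (A ⧸ H) = r := by
    have h1 : Nat.card A = Nat.card (A ⧸ H) * Nat.card H :=
      AddSubgroup.card_eq_card_quotient_mul_card_addSubgroup H
    rw [hH, Nat.card_eq_fintype_card, Nat.card_eq_fintype_card, hcard] at h1
    have h2 : r * q = Fintype.card (A ⧸ H) * q := (Nat.mul_comm r q).trans h1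
    exact (Nat.eq_of_mul_eq_mul_right hq h2).symm
  have hQodd : Odd (Fintype.card (A ⧸ H)) := hQcard ▸ hrodd
  have hσ := sum_univ_eq_zero_of_odd hQodd
  have hmem_of_inv : ∀ y : A, y + y = 0 → y ∈ H := by
    intro y hy
    have h2 : QuotientAddGroup.mk' H y + QuotientAddGroup.mk' H y = 0 := by
      rw [← map_add, hy, map_zero]
    exact (QuotientAddGroup.eq_zero_iff y).mp (double_inj_of_odd hQodd h2)
  have huniq : ¬ ∃! ι : ↥H, ι ≠ 0 ∧ ι + ι = 0 := by
    rintro ⟨⟨ι, hιH⟩, ⟨hι0, hι2⟩, hupdf⟩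
    apply hinv
    refine ⟨ι, ⟨?_, ?_⟩, ?_⟩
    · intro h
      exact hι0 (Subtype.ext h)
    · exact congrArg Subtype.val hι2
    · rintro y ⟨hy0, hy2⟩
      have hyH : y ∈ H := hmem_of_inv y hy2
      have := hupdf ⟨y, hyH⟩ ⟨fun h => hy0 (congrArg Subtype.val h), Subtype.ext hy2⟩
      exact congrArg Subtype.val this
  have hcm : HasCM ↥H := hasCM_of_not_unique_involution ↥H huniq
  obtain ⟨π, hπb, hπs⟩ := pi_exists_odd ↥H hcm (A ⧸ H) r hQcard hrodd hr3
  exact core_partition A q r hq hcard H hH hσ π hπb hπs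

/-! ### Zero-sum partitions : block size four -/

lemma zsp_four (A : Type) [AddCommGroup A] [Fintype A] [DecidableEq A]
    (q : ℕ) (hq : 0 < q) (hcard : Fintype.card A = q * 4)
    (hinv : ¬ ∃! ι : A, ι ≠ 0 ∧ ι + ι = 0) :
    ∃ P : Fin q → Finset A,
      (∀ i j, i ≠ j → Disjoint (P i) (P j)) ∧
      Finset.univ.biUnion P = Finset.univ ∧
      ∀ i, (P i).card = 4 ∧ ∑ a ∈ P i, a = 0 := by
  classical
  set dbl : A →+ A := AddMonoidHom.mk' (fun x => x + x) (by intro a b; abel) with hdbl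
  set N : AddSubgroup A := dbl.range with hN
  set K : AddSubgroup A := dbl.ker with hKdef
  haveI : Fintype K := Fintype.ofFinite _
  haveI : Fintype N := Fintype.ofFinite _
  -- two distinct involutions
  have h2card : (2:ℕ) ∣ Fintype.card A := by rw [hcard]; exact ⟨q * 2, by ring⟩
  haveI : Fact (Nat.Prime 2) := ⟨Nat.prime_two⟩
  obtain ⟨ι₁, hι₁⟩ := exists_prime_addOrderOf_dvd_card 2 h2card
  have hι₁0 : ι₁ ≠ 0 := by
    intro h
    rw [h, addOrderOf_zero] at hι₁
    omega
  have hι₁2 : ι₁ + ι₁ = 0 := by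
    have h2 : (2:ℕ) • ι₁ = 0 := addOrderOf_dvd_iff_nsmul_eq_zero.mp (by rw [hι₁])
    rwa [two_nsmul] at h2
  have hex2 : ∃ ι₂, (ι₂ ≠ 0 ∧ ι₂ + ι₂ = 0) ∧ ι₂ ≠ ι₁ := by
    by_contra hc
    push_neg at hc
    exact hinv ⟨ι₁, ⟨hι₁0, hι₁2⟩, fun y hy => hc y hy⟩
  obtain ⟨ι₂, ⟨hι₂0, hι₂2⟩, hι₂1⟩ := hex2
  -- membership of involutions in K
  have hmemK : ∀ y : A, y + y = 0 → y ∈ K := by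
    intro y hy
    rw [hKdef, AddMonoidHom.mem_ker]
    exact hy
  have hK2 : ∀ x : ↥K, x + x = 0 := by
    rintro ⟨x, hx⟩
    rw [hKdef, AddMonoidHom.mem_ker] at hx
    exact Subtype.ext hx
  -- card K ≥ 3
  have hKcard3 : 3 ≤ Fintype.card K := by
    have m1 : ι₁ ∈ K := hmemK ι₁ hι₁2
    have m2 : ι₂ ∈ K := hmemK ι₂ hι₂2
    have hS : ({(0 : ↥K), ⟨ι₁, m1⟩, ⟨ι₂, m2⟩} : Finset ↥K).card = 3 := by
      rw [Finset.card_insert_of_notMem (by simp [Subtype.ext_iff, hι₁0.symm, hι₂0.symm]),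
        Finset.card_insert_of_notMem (by simp [Subtype.ext_iff, hι₂1.symm]),
        Finset.card_singleton]
    calc 3 = ({(0 : ↥K), ⟨ι₁, m1⟩, ⟨ι₂, m2⟩} : Finset ↥K).card := hS.symm
      _ ≤ Fintype.card ↥K := Finset.card_le_univ _
  -- card K is a power of 2
  have hKprime : ∀ {d : ℕ}, Nat.Prime d → d ∣ Fintype.card ↥K → d = 2 := by
    intro d hd hdvd
    haveI : Fact (Nat.Prime d) := ⟨hd⟩
    obtain ⟨x, hx⟩ := exists_prime_addOrderOf_dvd_card (G := ↥K) d hdvd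
    have h2x : (2:ℕ) • x = 0 := by rw [two_nsmul]; exact hK2 x
    have : addOrderOf x ∣ 2 := addOrderOf_dvd_iff_nsmul_eq_zero.mpr h2x
    rw [hx] at this
    rcases (Nat.dvd_prime Nat.prime_two).mp this with h | h
    · exact absurd h hd.ne_one
    · exact h
  have hKpow : ∃ k, Fintype.card ↥K = 2 ^ k := by
    refine ⟨(Fintype.card ↥K).primeFactorsList.length, ?_⟩
    exact Nat.eq_prime_pow_of_unique_prime_dvd (by omega) hKprime
  have h4K : 4 ∣ Fintype.card ↥K := by
    obtain ⟨k, hk⟩ := hKpow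
    have hk2 : 2 ≤ k := by
      by_contra hc
      push_neg at hc
      interval_cases k <;> omega
    rw [hk, show (4:ℕ) = 2^2 from rfl]
    exact pow_dvd_pow 2 hk2
  -- card (A ⧸ N) = card K
  have e1 : (A ⧸ K) ≃+ ↥N := QuotientAddGroup.quotientKerEquivRange dbl
  have hc1 : Nat.card A = Nat.card (A ⧸ N) * Nat.card N :=
    AddSubgroup.card_eq_card_quotient_mul_card_addSubgroup N
  have hc2 : Nat.card A = Nat.card (A ⧸ K) * Nat.card K :=
    AddSubgroup.card_eq_card_quotient_mul_card_addSubgroup K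
  have hc3 : Nat.card (A ⧸ K) = Nat.card ↥N := Nat.card_congr e1.toEquiv
  have hNpos : 0 < Nat.card ↥N := Nat.card_pos
  have hVK : Nat.card (A ⧸ N) = Nat.card ↥K := by
    apply Nat.eq_of_mul_eq_mul_right hNpos
    calc Nat.card (A ⧸ N) * Nat.card ↥N = Nat.card A := hc1.symm
      _ = Nat.card (A ⧸ K) * Nat.card ↥K := hc2
      _ = Nat.card ↥N * Nat.card ↥K := by rw [hc3]
      _ = Nat.card ↥K * Nat.card ↥N := by ring
  have h4V : 4 ∣ Nat.card (A ⧸ N) := by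
    rw [hVK, Nat.card_eq_fintype_card]
    exact h4K
  obtain ⟨S, hS⟩ := conv_lagrange (Nat.card (A ⧸ N) / 4) (A ⧸ N) (Nat.div_dvd_of_dvd h4V)
  set H : AddSubgroup A := S.comap (QuotientAddGroup.mk' N) with hHdef
  have hHcard : Nat.card H = Nat.card (A ⧸ N) / 4 * Nat.card N := by
    rw [hHdef, card_comap_mk', hS]
  have hHq : Nat.card H = q := by
    have h4 : 4 * Nat.card H = 4 * q := by
      calc 4 * Nat.card H = 4 * (Nat.card (A ⧸ N) / 4) * Nat.card N := by
            rw [hHcard]; ring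
        _ = Nat.card (A ⧸ N) * Nat.card N := by rw [Nat.mul_div_cancel' h4V]
        _ = Nat.card A := hc1.symm
        _ = q * 4 := by rw [Nat.card_eq_fintype_card, hcard]
        _ = 4 * q := by ring
    omega
  have hNH : ∀ x ∈ N, x ∈ H := by
    intro x hx
    have hx0 : QuotientAddGroup.mk' N x = 0 := (QuotientAddGroup.eq_zero_iff x).mpr hx
    rw [hHdef]
    simp only [AddSubgroup.mem_comap, hx0]
    exact S.zero_mem
  haveI : Fintype H := Fintype.ofFinite _
  haveI : Fintype (A ⧸ H) := Fintype.ofFinite _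
  haveI : DecidableEq (A ⧸ H) := Classical.decEq _
  have hQ2 : ∀ c : A ⧸ H, c + c = 0 := by
    intro c
    obtain ⟨y, rfl⟩ := QuotientAddGroup.mk'_surjective H c
    rw [← map_add]
    refine (QuotientAddGroup.eq_zero_iff _).mpr (hNH _ ?_)
    exact ⟨y, rfl⟩
  have hQcard : Fintype.card (A ⧸ H) = 4 := by
    have h1 : Nat.card A = Nat.card (A ⧸ H) * Nat.card H :=
      AddSubgroup.card_eq_card_quotient_mul_card_addSubgroup H
    rw [hHq, Nat.card_eq_fintype_card, Nat.card_eq_fintype_card, hcard] at h1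
    have h2 : 4 * q = Fintype.card (A ⧸ H) * q := (Nat.mul_comm 4 q).trans h1
    exact (Nat.eq_of_mul_eq_mul_right hq h2).symm
  have hσ := sum_univ_eq_zero_of_exp2_card4 (A ⧸ H) hQ2 hQcard
  obtain ⟨π, hπb, hπs⟩ := pi_exists_even (↥H) (A ⧸ H) 4 hQcard (by decide)
  exact core_partition A q 4 hq hcard H hHq hσ π hπb hπs

/-! ### Bridge between `ncard` and `∃!` -/

lemma ncard_one_of_exists_unique {A : Type} [AddCommGroup A]
    (h : ∃! ι : A, ι ≠ 0 ∧ ι + ι = 0) : {ι : A | ι ≠ 0 ∧ ι + ι = 0}.ncard = 1 := by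
  obtain ⟨ι, hι, huniq⟩ := h
  rw [Set.ncard_eq_one]
  refine ⟨ι, ?_⟩
  ext y
  simp only [Set.mem_setOf_eq, Set.mem_singleton_iff]
  exact ⟨fun hy => huniq y hy, fun hy => hy ▸ hι⟩

/-! ### Main theorem -/

theorem zero_sum_partition_of_involutions_ne_one'
    (q r s : ℕ) (hr : 3 ≤ r) (hs : s = q * r)
    (A : Type) [AddCommGroup A] [Fintype A] [DecidableEq A]
    (hA : Fintype.card A = s)
    (hinv : {ι : A | ι ≠ 0 ∧ ι + ι = 0}.ncard ≠ 1) :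
    ∃ P : Fin q → Finset A,
      (∀ i j, i ≠ j → Disjoint (P i) (P j)) ∧
      Finset.univ.biUnion P = Finset.univ ∧
      ∀ i, (P i).card = r ∧ ∑ a ∈ P i, a = 0 := by
  classical
  subst hs
  have hq : 0 < q := by
    have hcp := Fintype.card_pos (α := A)
    rw [hA] at hcp
    by_contra h
    push_neg at h
    have hq0 : q = 0 := by omega
    rw [hq0, zero_mul] at hcp
    omega
  have hni : ¬ ∃! ι : A, ι ≠ 0 ∧ ι + ι = 0 := fun h => hinv (ncard_one_of_exists_unique h)
  set t := r.factorization 2 with ht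
  set u := r / 2 ^ t with hu
  have hr0 : r ≠ 0 := by omega
  have hru : r = 2 ^ t * u := (Nat.ordProj_mul_ordCompl_eq_self r 2).symm
  have huodd : Odd u := by
    rw [Nat.odd_iff]
    have h2 : ¬ 2 ∣ u := Nat.not_dvd_ordCompl Nat.prime_two hr0
    omega
  have hu0 : 0 < u := Nat.ordCompl_pos 2 hr0
  by_cases hu1 : u = 1
  · -- r = 2 ^ t with t ≥ 2
    have hrt : r = 2 ^ t := by rw [hru, hu1, mul_one]
    have ht2 : 2 ≤ t := by
      by_contra hc
      push_neg at hc
      interval_cases t <;> norm_num at hrt <;> omega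
    have hpow : 2 ^ t = 2 ^ (t - 2) * 4 := by
      rw [show (4:ℕ) = 2 ^ 2 from rfl, ← pow_add]
      congr 1
      omega
    have hcard4 : Fintype.card A = (q * 2 ^ (t - 2)) * 4 := by
      rw [hA, hrt, hpow]; ring
    obtain ⟨P', h1, h2, h3⟩ := zsp_four A (q * 2 ^ (t - 2)) (by positivity) hcard4 hni
    obtain ⟨P, hP1, hP2, hP3⟩ := merge_partition A q (2 ^ (t - 2)) 4 P' h1 h2 h3
    refine ⟨P, hP1, hP2, fun i => ⟨?_, (hP3 i).2⟩⟩
    rw [(hP3 i).1, hrt, hpow]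
  · have hu3 : 3 ≤ u := by
      rcases huodd with ⟨k, hk⟩
      omega
    have hcard' : Fintype.card A = (q * 2 ^ t) * u := by rw [hA, hru]; ring
    obtain ⟨P', h1, h2, h3⟩ := zsp_odd A (q * 2 ^ t) u (by positivity) hu3 huodd hcard' hni
    obtain ⟨P, hP1, hP2, hP3⟩ := merge_partition A q (2 ^ t) u P' h1 h2 h3
    exact ⟨P, hP1, hP2, fun i => ⟨by rw [(hP3 i).1, hru], (hP3 i).2⟩⟩


/-- Let `s = q * r` with `r ≥ 3`, and let `A` be an Abelian group of order `s` whose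
number of involutions is not one. Then `A` can be partitioned into `q` pairwise
disjoint subsets, each of size `r` and each summing to zero. -/
theorem zero_sum_partition_of_involutions_ne_one
    (q r s : ℕ) (hr : 3 ≤ r) (hs : s = q * r)
    (A : Type) [AddCommGroup A] [Fintype A] [DecidableEq A]
    (hA : Fintype.card A = s)
    (hinv : {ι : A | ι ≠ 0 ∧ ι + ι = 0}.ncard ≠ 1) :
    ∃ P : Fin q → Finset A,
      (∀ i j, i ≠ j → Disjoint (P i) (P j)) ∧
      Finset.univ.biUnion P = Finset.univ ∧
      ∀ i, (P i).card = r ∧ ∑ a ∈ P i, a = 0 := by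
  exact zero_sum_partition_of_involutions_ne_one' q r s hr hs A hA hinv
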